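/- Let v = φ^(e) * μ_3 * μ (Dirichlet convolutions), where φ^(e) is the multiplicative function with φ^(e)(p^a)=φ(a). Then v(p^a)=0 for 1≤a≤4, and v(p^a)=φ(a)-φ(a-1)-φ(a-3)+φ(a-4) for a≥5, for every prime p. -/

import Mathlib

open ArithmeticFunction Finset
open scoped ArithmeticFunction.Moebius

/-- `μ₃(n) = μ(m)` if `n = m³`, and `0` otherwise. -/
def mu3 : ArithmeticFunction ℤ :=
  ⟨fun n => ∑ m ∈ n.divisors, if m ^ 3 = n then μ m else 0, by simp⟩

/-- `φ^(e)`, the multiplicative function with `φ^(e)(p^a) = φ(a)`, as an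
integer-valued arithmetic function. -/
def phieA : ArithmeticFunction ℤ :=
  ⟨fun n => if n = 0 then 0 else (n.factorization.prod fun _ a => Nat.totient a : ℕ), by simp⟩

lemma mul_apply_pp (f g : ArithmeticFunction ℤ) {p : ℕ} (hp : p.Prime) (a : ℕ) :
    (f * g) (p ^ a) = ∑ i ∈ Finset.range (a + 1), f (p ^ i) * g (p ^ (a - i)) := by
  rw [mul_apply, Nat.sum_divisorsAntidiagonal (fun i j => f i * g j),
    Nat.sum_divisors_prime_pow hp]
  refine Finset.sum_congr rfl fun i hi => ?_
  rw [Finset.mem_range, Nat.lt_succ_iff] at hi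
  rw [Nat.pow_div hi hp.pos]

lemma phieA_pp {p : ℕ} (hp : p.Prime) (i : ℕ) :
    phieA (p ^ i) = if i = 0 then 1 else (Nat.totient i : ℤ) := by
  rcases Nat.eq_zero_or_pos i with rfl | hi
  · simp [phieA]
  · have h1 : (p : ℕ) ^ i ≠ 0 := pow_ne_zero _ hp.pos.ne'
    rw [show phieA (p ^ i) = if p ^ i = 0 then 0 else
        (((p ^ i).factorization.prod fun _ a => Nat.totient a : ℕ) : ℤ) from rfl,
      if_neg h1, if_neg hi.ne', Nat.Prime.factorization_pow hp, Finsupp.prod,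
      Finsupp.support_single_ne_zero _ hi.ne', Finset.prod_singleton,
      Finsupp.single_eq_same]

lemma mu3_pp {p : ℕ} (hp : p.Prime) (j : ℕ) :
    mu3 (p ^ j) = if j = 0 then 1 else if j = 3 then -1 else 0 := by
  have hinj : Function.Injective (p ^ ·) :=
    Nat.pow_right_injective hp.two_le
  rw [show mu3 (p ^ j) = ∑ m ∈ (p ^ j).divisors, if m ^ 3 = p ^ j then μ m else 0 from rfl,
    Nat.sum_divisors_prime_pow hp]
  have key : ∀ i, (p ^ i) ^ 3 = p ^ j ↔ 3 * i = j := by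
    intro i
    rw [← pow_mul, mul_comm]
    exact ⟨fun h => hinj h, fun h => by rw [h]⟩
  rcases Nat.eq_zero_or_pos j with rfl | hj
  · simp [key, moebius_apply_one]
  · rw [if_neg hj.ne']
    by_cases h3 : j = 3
    · subst h3
      rw [if_pos rfl, Finset.sum_eq_single 1]
      · simp [key, moebius_apply_prime hp]
      · intro i hi hne
        rw [if_neg]
        rw [key]
        omega
      · intro h; simp at h
    · rw [if_neg h3, Finset.sum_eq_zero]
      intro i hi
      by_cases h : 3 * i = j
      · rw [if_pos ((key i).mpr h), moebius_apply_prime_pow hp (by omega), if_neg (by omega)]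
      · rw [if_neg (fun hc => h ((key i).mp hc))]

lemma sum_if_sub (F : ℕ → ℤ) (a t : ℕ) :
    (∑ i ∈ Finset.range (a + 1), if a - i = t then F i else 0)
      = if t ≤ a then F (a - t) else 0 := by
  rcases le_or_gt t a with h | h
  · rw [if_pos h, Finset.sum_eq_single (a - t)]
    · rw [if_pos (by omega)]
    · intro i hi hne
      rw [Finset.mem_range] at hi
      rw [if_neg (by omega)]
    · intro hmem
      exact absurd (Finset.mem_range.mpr (by omega)) hmem
  · rw [if_neg (by omega), Finset.sum_eq_zero]
    intro i hi
    rw [Finset.mem_range] at hi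
    rw [if_neg (by omega)]

lemma phimu3_pp {p : ℕ} (hp : p.Prime) (a : ℕ) :
    (phieA * mu3) (p ^ a) =
      (if a = 0 then 1 else (Nat.totient a : ℤ))
        - (if 3 ≤ a then (if a - 3 = 0 then 1 else (Nat.totient (a - 3) : ℤ)) else 0) := by
  rw [mul_apply_pp _ _ hp]
  have : ∀ i ∈ Finset.range (a + 1),
      phieA (p ^ i) * mu3 (p ^ (a - i)) =
        (if a - i = 0 then (if i = 0 then 1 else (Nat.totient i : ℤ)) else 0)
          - (if a - i = 3 then (if i = 0 then 1 else (Nat.totient i : ℤ)) else 0) := by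
    intro i _
    rw [phieA_pp hp, mu3_pp hp]
    split_ifs <;> omega
  rw [Finset.sum_congr rfl this, Finset.sum_sub_distrib, sum_if_sub, sum_if_sub,
    if_pos (Nat.zero_le a), Nat.sub_zero]

lemma v_pp {p : ℕ} (hp : p.Prime) (a : ℕ) :
    (phieA * mu3 * μ) (p ^ a) =
      ((if a = 0 then 1 else (Nat.totient a : ℤ))
        - (if 3 ≤ a then (if a - 3 = 0 then 1 else (Nat.totient (a - 3) : ℤ)) else 0))
      - (if 1 ≤ a then
          ((if a - 1 = 0 then 1 else (Nat.totient (a - 1) : ℤ))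
            - (if 3 ≤ a - 1 then (if a - 1 - 3 = 0 then 1 else (Nat.totient (a - 1 - 3) : ℤ))
                else 0))
        else 0) := by
  rw [mul_apply_pp _ _ hp]
  have : ∀ i ∈ Finset.range (a + 1),
      (phieA * mu3) (p ^ i) * (μ (p ^ (a - i)) : ℤ) =
        (if a - i = 0 then (phieA * mu3) (p ^ i) else 0)
          - (if a - i = 1 then (phieA * mu3) (p ^ i) else 0) := by
    intro i _
    have hmu : (μ (p ^ (a - i)) : ℤ) =
        if a - i = 0 then 1 else if a - i = 1 then -1 else 0 := by
      rcases Nat.eq_zero_or_pos (a - i) with h | h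
      · rw [h]; simp
      · rw [if_neg h.ne', moebius_apply_prime_pow hp h.ne']
    rw [hmu]
    split_ifs <;> omega
  rw [Finset.sum_congr rfl this, Finset.sum_sub_distrib, sum_if_sub, sum_if_sub,
    if_pos (Nat.zero_le a), Nat.sub_zero]
  simp only [phimu3_pp hp]

theorem v_prime_powers (p : ℕ) (hp : p.Prime) :
    (∀ a : ℕ, 1 ≤ a → a ≤ 4 → (phieA * mu3 * μ) (p ^ a) = 0) ∧
      ∀ a : ℕ, 5 ≤ a → (phieA * mu3 * μ) (p ^ a) =
        (Nat.totient a : ℤ) - Nat.totient (a - 1) - Nat.totient (a - 3) + Nat.totient (a - 4) := by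
  constructor
  · intro a h1 h4
    rw [v_pp hp]
    interval_cases a <;> decide
  · intro a h5
    rw [v_pp hp, if_neg (by omega : ¬a = 0), if_pos (by omega : 3 ≤ a),
      if_neg (by omega : ¬a - 3 = 0), if_pos (by omega : 1 ≤ a),
      if_neg (by omega : ¬a - 1 = 0), if_pos (by omega : 3 ≤ a - 1),
      if_neg (by omega : ¬a - 1 - 3 = 0), show a - 1 - 3 = a - 4 from by omega]
    ring
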